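/- Let R be a commutative unital ring and I an ideal such that I is a ℚ-vector space (i.e., uniquely divisible) and R/I is a binomial ring. Then R is a binomial ring and I is a binomial ideal of R. -/

import Mathlib

lemma descPochhammer_smeval_eq_prod' {S : Type*} [CommRing S] (r : S) (n : ℕ) :
    (descPochhammer ℤ n).smeval r = ∏ i ∈ Finset.range n, (r - (i : ℕ)) := by
  induction n with
  | zero => simp [Polynomial.smeval_one]
  | succ n ih =>
      rw [descPochhammer_succ_right, Polynomial.smeval_mul, ih, Finset.prod_range_succ]
      congr 1
      rw [Polynomial.smeval_sub, Polynomial.smeval_X, Polynomial.smeval_natCast]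
      simp

/-- Let `I` be an ideal of a commutative ring `R` which is a `ℚ`-vector space
(uniquely divisible), and suppose `R/I` is a binomial ring.  Then `R` is itself a
binomial ring (torsion-free and closed under binomial coefficients) and `I` is a
binomial ideal. -/
theorem binomial_of_quotient_binomial {R : Type*} [CommRing R] (I : Ideal R)
    (hdiv : ∀ x ∈ I, ∀ n : ℕ, 0 < n → ∃ y ∈ I, n • y = x)
    (htfI : ∀ x ∈ I, ∀ n : ℕ, 0 < n → n • x = 0 → x = 0)
    [BinomialRing (R ⧸ I)] :
    (∀ (n : ℕ) (r : R), 0 < n → n • r = 0 → r = 0) ∧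
    ∃ bc : R → ℕ → R,
      (∀ (r : R) (n : ℕ),
        (n.factorial : R) * bc r n = ∏ i ∈ Finset.range n, (r - (i : ℕ))) ∧
      (∀ e ∈ I, ∀ n : ℕ, 0 < n → bc e n ∈ I) := by
  have hquot : ∀ (x : R ⧸ I) (n : ℕ),
      (n.factorial : R ⧸ I) * Ring.choose x n = ∏ i ∈ Finset.range n, (x - (i : ℕ)) := by
    intro x n
    rw [← descPochhammer_smeval_eq_prod', Ring.descPochhammer_eq_factorial_smul_choose,
      nsmul_eq_mul]
  constructor
  · intro n r hn hr
    have h1 : (n • (Ideal.Quotient.mk I r) : R ⧸ I) = 0 := by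
      rw [← map_nsmul, hr, map_zero]
    have h2 : Ideal.Quotient.mk I r = 0 := by
      apply @nsmul_right_injective (R ⧸ I) _ BinomialRing.toIsAddTorsionFree n hn.ne'
      simpa using h1
    exact htfI r (Ideal.Quotient.eq_zero_iff_mem.mp h2) n hn hr
  · have key : ∀ (r : R) (n : ℕ), ∃ c : R,
        ((n.factorial : R) * c = ∏ i ∈ Finset.range n, (r - (i : ℕ))) ∧
        Ideal.Quotient.mk I c = Ring.choose (Ideal.Quotient.mk I r) n := by
      intro r n
      obtain ⟨c₀, hc₀⟩ := Ideal.Quotient.mk_surjective (Ring.choose (Ideal.Quotient.mk I r) n)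
      have hz : (n.factorial : R) * c₀ - ∏ i ∈ Finset.range n, (r - (i : ℕ)) ∈ I := by
        rw [← Ideal.Quotient.eq_zero_iff_mem]
        simp only [map_sub, map_mul, map_prod, map_natCast, hc₀, hquot, sub_self]
      obtain ⟨y, hyI, hy⟩ := hdiv _ hz n.factorial n.factorial_pos
      refine ⟨c₀ - y, ?_, ?_⟩
      · rw [mul_sub]
        have : (n.factorial : R) * y = n.factorial • y := by
          rw [nsmul_eq_mul]
        rw [this, hy]
        ring
      · rw [map_sub, hc₀, Ideal.Quotient.eq_zero_iff_mem.mpr hyI, sub_zero]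
    choose bc h1 h2 using key
    refine ⟨bc, fun r n => h1 r n, fun e he n hn => ?_⟩
    rw [← Ideal.Quotient.eq_zero_iff_mem, h2, Ideal.Quotient.eq_zero_iff_mem.mpr he,
      Ring.choose_zero_pos _ hn]
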